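/- Let C₀, C₁ ⊆ ℂ² be plane algebraic curves and suppose there exist points p₁, p₂, p₃ lying on both C₀ and C₁ with d(pⱼ,pₖ) ≠ 0 for all 1 ≤ j < k ≤ 3, such that the sets {(d(p₁,q), d(p₂,q), d(p₃,q)) : q ∈ C₀} and {(d(p₁,q), d(p₂,q), d(p₃,q)) : q ∈ C₁} are equal. Then there exists h ∈ E(ℂ) with h·pᵢ = pᵢ for i = 1,2,3 such that C₀ = h·C₁ (equality of subsets of ℂ²). -/

import Mathlib

open scoped Matrix

noncomputable section

/-- Squared distance between two points of `ℂ²`. -/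
def sqDist (p q : ℂ × ℂ) : ℂ := (p.1 - q.1) ^ 2 + (p.2 - q.2) ^ 2

/-- A complex orthogonal 2×2 matrix: `Aᵀ A = I`. -/
def IsOrtho (A : Matrix (Fin 2) (Fin 2) ℂ) : Prop := A.transpose * A = 1

/-- The affine map `x ↦ A x + v` on `ℂ²`. -/
def euclApply (A : Matrix (Fin 2) (Fin 2) ℂ) (v : ℂ × ℂ) (p : ℂ × ℂ) : ℂ × ℂ :=
  (A 0 0 * p.1 + A 0 1 * p.2 + v.1, A 1 0 * p.1 + A 1 1 * p.2 + v.2)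

/-- A plane algebraic curve: the zero set of an irreducible polynomial of total degree `> 1`. -/
def IsPlaneCurve (C : Set (ℂ × ℂ)) : Prop :=
  ∃ f : MvPolynomial (Fin 2) ℂ, Irreducible f ∧ 1 < f.totalDegree ∧
    C = {p : ℂ × ℂ | MvPolynomial.eval ![p.1, p.2] f = 0}

namespace ThreePointSliceAux

open MvPolynomial

lemma vec_two (x : Fin 2 → ℂ) : ![x 0, x 1] = x := by
  funext i; fin_cases i <;> simp

lemma dvd_of_vanish {f g : MvPolynomial (Fin 2) ℂ} (hf : Irreducible f)
    (h : ∀ x : Fin 2 → ℂ, MvPolynomial.eval x f = 0 → MvPolynomial.eval x g = 0) : f ∣ g := by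
  have hp : Prime f := hf.prime
  have hPrime : (Ideal.span {f}).IsPrime := (Ideal.span_singleton_prime hp.ne_zero).mpr hp
  rw [← Ideal.mem_span_singleton]
  have hg : g ∈ MvPolynomial.vanishingIdeal ℂ (MvPolynomial.zeroLocus ℂ (Ideal.span {f})) := by
    rw [MvPolynomial.mem_vanishingIdeal_iff]
    intro x hx
    exact h x (MvPolynomial.mem_zeroLocus_iff.mp hx f (Ideal.mem_span_singleton_self f))
  rwa [MvPolynomial.vanishingIdeal_zeroLocus_eq_radical, hPrime.radical] at hg

lemma eval_zero_iff_of_dvd {f g : MvPolynomial (Fin 2) ℂ} (hf : Irreducible f)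
    (hg : Irreducible g) (hdvd : f ∣ g) (x : Fin 2 → ℂ) :
    MvPolynomial.eval x f = 0 ↔ MvPolynomial.eval x g = 0 := by
  obtain ⟨c, rfl⟩ := hdvd
  have hc : IsUnit c := (hg.isUnit_or_isUnit rfl).resolve_left hf.not_isUnit
  have hcx : MvPolynomial.eval x c ≠ 0 := (hc.map (MvPolynomial.eval x)).ne_zero
  simp [mul_eq_zero, hcx]

lemma refl_dichotomy (u1 u2 P1 P2 q1 q2 r1 r2 : ℂ) (he : u1^2 + u2^2 ≠ 0)
    (h1 : (P1 - q1)^2 + (P2 - q2)^2 = (P1 - r1)^2 + (P2 - r2)^2)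
    (h2 : (P1 + u1 - q1)^2 + (P2 + u2 - q2)^2 = (P1 + u1 - r1)^2 + (P2 + u2 - r2)^2) :
    (r1 = q1 ∧ r2 = q2) ∨
    (r1 = ((u1^2 - u2^2)*(q1 - P1) + 2*u1*u2*(q2 - P2))/(u1^2 + u2^2) + P1 ∧
     r2 = (2*u1*u2*(q1 - P1) - (u1^2 - u2^2)*(q2 - P2))/(u1^2 + u2^2) + P2) := by
  have hw : u1*(r1 - q1) + u2*(r2 - q2) = 0 := by linear_combination (h2 - h1)/2
  have key : (u1*(r2 - q2) - u2*(r1 - q1)) *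
      (2*(u1*(q2 - P2) - u2*(q1 - P1)) + (u1*(r2 - q2) - u2*(r1 - q1))) = 0 := by
    linear_combination (-(u1^2+u2^2)) * h1 - (u1*(q1 + r1 - 2*P1) + u2*(q2 + r2 - 2*P2)) * hw
  rcases mul_eq_zero.mp key with ht | ht
  · left
    have e1 : (u1^2+u2^2)*(r1 - q1) = 0 := by linear_combination u1*hw - u2*ht
    have e2 : (u1^2+u2^2)*(r2 - q2) = 0 := by linear_combination u2*hw + u1*ht
    exact ⟨sub_eq_zero.mp ((mul_eq_zero.mp e1).resolve_left he),
           sub_eq_zero.mp ((mul_eq_zero.mp e2).resolve_left he)⟩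
  · right
    have e1 : (u1^2+u2^2)*(r1 - q1) = 2*u2*(u1*(q2 - P2) - u2*(q1 - P1)) := by
      linear_combination u1*hw - u2*ht
    have e2 : (u1^2+u2^2)*(r2 - q2) = -2*u1*(u1*(q2 - P2) - u2*(q1 - P1)) := by
      linear_combination u2*hw + u1*ht
    constructor
    · field_simp
      linear_combination e1
    · field_simp
      linear_combination e2

def subMap (a b v1 v2 : ℂ) : MvPolynomial (Fin 2) ℂ →ₐ[ℂ] MvPolynomial (Fin 2) ℂ :=
  MvPolynomial.aeval ![C a * X 0 + C b * X 1 + C v1, C b * X 0 - C a * X 1 + C v2]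

lemma eval_subMap (a b v1 v2 : ℂ) (x : Fin 2 → ℂ) (φ : MvPolynomial (Fin 2) ℂ) :
    MvPolynomial.eval x (subMap a b v1 v2 φ) =
      MvPolynomial.eval ![a * x 0 + b * x 1 + v1, b * x 0 - a * x 1 + v2] φ := by
  have h : subMap a b v1 v2 φ =
      MvPolynomial.bind₁ ![C a * X 0 + C b * X 1 + C v1, C b * X 0 - C a * X 1 + C v2] φ := rfl
  rw [h]
  show eval₂Hom (RingHom.id ℂ) x _ = _
  rw [MvPolynomial.eval₂Hom_bind₁]
  have h2 : (fun i => eval₂Hom (RingHom.id ℂ) x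
      (![C a * X 0 + C b * X 1 + C v1, C b * X 0 - C a * X 1 + C v2] i)) =
      ![a * x 0 + b * x 1 + v1, b * x 0 - a * x 1 + v2] := by
    funext i; fin_cases i <;> simp
  rw [h2]
  rfl

lemma subMap_comp (a b v1 v2 : ℂ) (hab : a^2 + b^2 = 1) (hv1 : a*v1 + b*v2 + v1 = 0)
    (hv2 : b*v1 - a*v2 + v2 = 0) :
    (subMap a b v1 v2).comp (subMap a b v1 v2) = AlgHom.id ℂ _ := by
  have hC1 : (C (a^2+b^2) : MvPolynomial (Fin 2) ℂ) = 1 := by rw [hab, map_one]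
  have hCv1 : (C (a*v1 + b*v2 + v1) : MvPolynomial (Fin 2) ℂ) = 0 := by rw [hv1, map_zero]
  have hCv2 : (C (b*v1 - a*v2 + v2) : MvPolynomial (Fin 2) ℂ) = 0 := by rw [hv2, map_zero]
  simp only [map_add, map_mul, map_pow, map_sub] at hC1 hCv1 hCv2
  apply MvPolynomial.algHom_ext
  intro i
  fin_cases i <;>
    simp [subMap, MvPolynomial.algebraMap_eq]
  · linear_combination (X 0 : MvPolynomial (Fin 2) ℂ) * hC1 + hCv1
  · linear_combination (X 1 : MvPolynomial (Fin 2) ℂ) * hC1 + hCv2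

lemma irreducible_subMap (a b v1 v2 : ℂ) (hab : a^2 + b^2 = 1) (hv1 : a*v1 + b*v2 + v1 = 0)
    (hv2 : b*v1 - a*v2 + v2 = 0) {g : MvPolynomial (Fin 2) ℂ} (hg : Irreducible g) :
    Irreducible (subMap a b v1 v2 g) := by
  let E : MvPolynomial (Fin 2) ℂ ≃ₐ[ℂ] MvPolynomial (Fin 2) ℂ :=
    AlgEquiv.ofAlgHom (subMap a b v1 v2) (subMap a b v1 v2)
      (subMap_comp a b v1 v2 hab hv1 hv2) (subMap_comp a b v1 v2 hab hv1 hv2)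
  exact hg.map E.toRingEquiv.toMulEquiv

lemma isOrtho_refl (a b : ℂ) (hab : a^2 + b^2 = 1) : IsOrtho !![a, b; b, -a] := by
  have hT : (!![a, b; b, -a]).transpose = !![a, b; b, -a] := by
    rw [Matrix.eta_fin_two (!![a, b; b, -a]).transpose]; simp
  show (!![a, b; b, -a]).transpose * _ = 1
  rw [hT, Matrix.mul_fin_two, Matrix.one_fin_two]
  ext i j
  fin_cases i <;> fin_cases j <;> simp <;>
    first
      | linear_combination hab
      | ring

lemma euclApply_refl (a b v1 v2 : ℂ) (p : ℂ × ℂ) :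
    euclApply !![a, b; b, -a] (v1, v2) p = (a*p.1 + b*p.2 + v1, b*p.1 - a*p.2 + v2) := by
  refine Prod.ext ?_ ?_ <;> simp [euclApply] <;> ring

lemma refl_invol (a b v1 v2 : ℂ) (hab : a^2 + b^2 = 1) (hv1 : a*v1 + b*v2 + v1 = 0)
    (hv2 : b*v1 - a*v2 + v2 = 0) (p : ℂ × ℂ) :
    euclApply !![a, b; b, -a] (v1, v2) (euclApply !![a, b; b, -a] (v1, v2) p) = p := by
  rw [euclApply_refl, euclApply_refl]
  refine Prod.ext ?_ ?_
  · show a*(a*p.1 + b*p.2 + v1) + b*(b*p.1 - a*p.2 + v2) + v1 = p.1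
    linear_combination p.1 * hab + hv1
  · show b*(a*p.1 + b*p.2 + v1) - a*(b*p.1 - a*p.2 + v2) + v2 = p.2
    linear_combination p.2 * hab + hv2

lemma eval_subMap_point (a b v1 v2 : ℂ) (g : MvPolynomial (Fin 2) ℂ) (p : ℂ × ℂ) :
    MvPolynomial.eval ![p.1, p.2] (subMap a b v1 v2 g) =
      MvPolynomial.eval ![(euclApply !![a, b; b, -a] (v1, v2) p).1,
        (euclApply !![a, b; b, -a] (v1, v2) p).2] g := by
  rw [eval_subMap, euclApply_refl]
  congr 1
  all_goals (funext i; fin_cases i <;> simp)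

lemma image_eq (a b v1 v2 : ℂ) (hab : a^2 + b^2 = 1) (hv1 : a*v1 + b*v2 + v1 = 0)
    (hv2 : b*v1 - a*v2 + v2 = 0) (g : MvPolynomial (Fin 2) ℂ) :
    {p : ℂ × ℂ | MvPolynomial.eval ![p.1, p.2] (subMap a b v1 v2 g) = 0} =
      euclApply !![a, b; b, -a] (v1, v2) '' {p : ℂ × ℂ | MvPolynomial.eval ![p.1, p.2] g = 0} := by
  ext p
  simp only [Set.mem_setOf_eq, Set.mem_image]
  constructor
  · intro hp
    refine ⟨euclApply !![a, b; b, -a] (v1, v2) p, ?_, refl_invol a b v1 v2 hab hv1 hv2 p⟩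
    rw [eval_subMap_point] at hp
    exact hp
  · rintro ⟨r, hr, rfl⟩
    rw [eval_subMap_point, refl_invol a b v1 v2 hab hv1 hv2 r]
    exact hr

lemma collinear_exists (P1 P2 Q1 Q2 R1 R2 : ℂ)
    (he : (Q1 - P1)^2 + (Q2 - P2)^2 ≠ 0)
    (hcol : (Q1 - P1) * (R2 - P2) = (Q2 - P2) * (R1 - P1)) :
    ∃ a b v1 v2 : ℂ, a^2 + b^2 = 1 ∧ a*v1 + b*v2 + v1 = 0 ∧ b*v1 - a*v2 + v2 = 0 ∧
      a*P1 + b*P2 + v1 = P1 ∧ b*P1 - a*P2 + v2 = P2 ∧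
      a*Q1 + b*Q2 + v1 = Q1 ∧ b*Q1 - a*Q2 + v2 = Q2 ∧
      a*R1 + b*R2 + v1 = R1 ∧ b*R1 - a*R2 + v2 = R2 ∧
      ∀ q1 q2 r1 r2 : ℂ,
        (P1 - q1)^2 + (P2 - q2)^2 = (P1 - r1)^2 + (P2 - r2)^2 →
        (Q1 - q1)^2 + (Q2 - q2)^2 = (Q1 - r1)^2 + (Q2 - r2)^2 →
        (r1 = q1 ∧ r2 = q2) ∨ (r1 = a*q1 + b*q2 + v1 ∧ r2 = b*q1 - a*q2 + v2) := by
  set u1 := Q1 - P1 with hu1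
  set u2 := Q2 - P2 with hu2
  obtain ⟨a, hea⟩ : ∃ a : ℂ, (u1^2 + u2^2) * a = u1^2 - u2^2 :=
    ⟨(u1^2 - u2^2)/(u1^2 + u2^2), mul_div_cancel₀ _ he⟩
  obtain ⟨b, heb⟩ : ∃ b : ℂ, (u1^2 + u2^2) * b = 2*u1*u2 :=
    ⟨2*u1*u2/(u1^2 + u2^2), mul_div_cancel₀ _ he⟩
  have hab : a^2 + b^2 = 1 := by
    have h : (u1^2 + u2^2)^2 * (a^2 + b^2) = (u1^2 + u2^2)^2 * 1 := by
      linear_combination ((u1^2 + u2^2)*a + (u1^2 - u2^2))*hea + ((u1^2 + u2^2)*b + 2*u1*u2)*heb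
    exact mul_left_cancel₀ (pow_ne_zero 2 he) h
  refine ⟨a, b, P1 - a*P1 - b*P2, P2 - b*P1 + a*P2, hab, ?_, ?_, by ring, by ring,
    ?_, ?_, ?_, ?_, ?_⟩
  · linear_combination (-P1)*hab
  · linear_combination (-P2)*hab
  · apply mul_left_cancel₀ he
    linear_combination (Q1 - P1)*hea + (Q2 - P2)*heb
  · apply mul_left_cancel₀ he
    linear_combination (Q1 - P1)*heb - (Q2 - P2)*hea
  · apply mul_left_cancel₀ he
    linear_combination (R1 - P1)*hea + (R2 - P2)*heb + 2*u2*hcol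
  · apply mul_left_cancel₀ he
    linear_combination (R1 - P1)*heb - (R2 - P2)*hea - 2*u1*hcol
  · intro q1 q2 r1 r2 h1 h2
    have h2' : (P1 + u1 - q1)^2 + (P2 + u2 - q2)^2 = (P1 + u1 - r1)^2 + (P2 + u2 - r2)^2 := by
      rw [hu1, hu2]
      linear_combination h2
    rcases refl_dichotomy u1 u2 P1 P2 q1 q2 r1 r2 he h1 h2' with h | ⟨hr1, hr2⟩
    · exact Or.inl h
    · right
      constructor
      · rw [hr1, div_add' _ _ _ he, div_eq_iff he]
        linear_combination (P1 - q1)*hea + (P2 - q2)*heb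
      · rw [hr2, div_add' _ _ _ he, div_eq_iff he]
        linear_combination (q2 - P2)*hea + (P1 - q1)*heb

lemma exists_of_eq (C₀ C₁ : Set (ℂ × ℂ)) (p₁ p₂ p₃ : ℂ × ℂ) (h : C₀ = C₁) :
    ∃ (A : Matrix (Fin 2) (Fin 2) ℂ) (v : ℂ × ℂ), IsOrtho A ∧
      euclApply A v p₁ = p₁ ∧ euclApply A v p₂ = p₂ ∧ euclApply A v p₃ = p₃ ∧
      C₀ = euclApply A v '' C₁ := by
  have hid : ∀ p : ℂ × ℂ, euclApply 1 (0, 0) p = p := by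
    intro p
    simp [euclApply, Matrix.one_apply]
  refine ⟨1, (0, 0), ?_, hid p₁, hid p₂, hid p₃, ?_⟩
  · show (1 : Matrix (Fin 2) (Fin 2) ℂ).transpose * 1 = 1
    simp
  · rw [h, show euclApply 1 ((0 : ℂ), (0 : ℂ)) = id from funext hid, Set.image_id]

end ThreePointSliceAux

open ThreePointSliceAux in
theorem curves_equal_of_three_point_slice (C₀ C₁ : Set (ℂ × ℂ))
    (hC₀ : IsPlaneCurve C₀) (hC₁ : IsPlaneCurve C₁)
    (p₁ p₂ p₃ : ℂ × ℂ)
    (hp₁₀ : p₁ ∈ C₀) (hp₁₁ : p₁ ∈ C₁) (hp₂₀ : p₂ ∈ C₀) (hp₂₁ : p₂ ∈ C₁)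
    (hp₃₀ : p₃ ∈ C₀) (hp₃₁ : p₃ ∈ C₁)
    (hd₁₂ : sqDist p₁ p₂ ≠ 0) (hd₁₃ : sqDist p₁ p₃ ≠ 0) (hd₂₃ : sqDist p₂ p₃ ≠ 0)
    (hslice : {x : ℂ × ℂ × ℂ | ∃ q ∈ C₀, x = (sqDist p₁ q, sqDist p₂ q, sqDist p₃ q)} =
              {x : ℂ × ℂ × ℂ | ∃ q ∈ C₁, x = (sqDist p₁ q, sqDist p₂ q, sqDist p₃ q)}) :
    ∃ (A : Matrix (Fin 2) (Fin 2) ℂ) (v : ℂ × ℂ), IsOrtho A ∧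
      euclApply A v p₁ = p₁ ∧ euclApply A v p₂ = p₂ ∧ euclApply A v p₃ = p₃ ∧
      C₀ = euclApply A v '' C₁ := by
  obtain ⟨f, hf, -, hCf⟩ := hC₀
  obtain ⟨g, hg, -, hCg⟩ := hC₁
  by_cases hcol : (p₂.1 - p₁.1) * (p₃.2 - p₁.2) = (p₂.2 - p₁.2) * (p₃.1 - p₁.1)
  case neg =>
    have hD : (p₂.1 - p₁.1) * (p₃.2 - p₁.2) - (p₂.2 - p₁.2) * (p₃.1 - p₁.1) ≠ 0 :=
      sub_ne_zero_of_ne hcol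
    have inj : ∀ q r : ℂ × ℂ, sqDist p₁ q = sqDist p₁ r → sqDist p₂ q = sqDist p₂ r →
        sqDist p₃ q = sqDist p₃ r → q = r := by
      intro q r h1 h2 h3
      simp only [sqDist] at h1 h2 h3
      have A1 : (p₂.1 - p₁.1)*(r.1 - q.1) + (p₂.2 - p₁.2)*(r.2 - q.2) = 0 := by
        linear_combination (h2 - h1)/2
      have A2 : (p₃.1 - p₁.1)*(r.1 - q.1) + (p₃.2 - p₁.2)*(r.2 - q.2) = 0 := by
        linear_combination (h3 - h1)/2
      have w1 : (r.1 - q.1) * ((p₂.1 - p₁.1)*(p₃.2 - p₁.2) - (p₂.2 - p₁.2)*(p₃.1 - p₁.1)) = 0 := by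
        linear_combination (p₃.2 - p₁.2)*A1 - (p₂.2 - p₁.2)*A2
      have w2 : (r.2 - q.2) * ((p₂.1 - p₁.1)*(p₃.2 - p₁.2) - (p₂.2 - p₁.2)*(p₃.1 - p₁.1)) = 0 := by
        linear_combination (p₂.1 - p₁.1)*A2 - (p₃.1 - p₁.1)*A1
      have hq1 : r.1 = q.1 := sub_eq_zero.mp ((mul_eq_zero.mp w1).resolve_right hD)
      have hq2 : r.2 = q.2 := sub_eq_zero.mp ((mul_eq_zero.mp w2).resolve_right hD)
      exact (Prod.ext hq1 hq2).symm
    have hC : C₀ = C₁ := by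
      apply Set.Subset.antisymm
      · intro q hq
        have hm : (sqDist p₁ q, sqDist p₂ q, sqDist p₃ q) ∈
            {x : ℂ × ℂ × ℂ | ∃ q' ∈ C₁, x = (sqDist p₁ q', sqDist p₂ q', sqDist p₃ q')} := by
          rw [← hslice]; exact ⟨q, hq, rfl⟩
        obtain ⟨r, hr, heq⟩ := hm
        simp only [Prod.mk.injEq] at heq
        rw [inj q r heq.1 heq.2.1 heq.2.2]
        exact hr
      · intro q hq
        have hm : (sqDist p₁ q, sqDist p₂ q, sqDist p₃ q) ∈
            {x : ℂ × ℂ × ℂ | ∃ q' ∈ C₀, x = (sqDist p₁ q', sqDist p₂ q', sqDist p₃ q')} := by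
          rw [hslice]; exact ⟨q, hq, rfl⟩
        obtain ⟨r, hr, heq⟩ := hm
        simp only [Prod.mk.injEq] at heq
        rw [inj q r heq.1 heq.2.1 heq.2.2]
        exact hr
    exact exists_of_eq C₀ C₁ p₁ p₂ p₃ hC
  case pos =>
    have he : ((p₂.1 - p₁.1)^2 + (p₂.2 - p₁.2)^2 : ℂ) ≠ 0 := fun h =>
      hd₁₂ (by simp only [sqDist]; linear_combination h)
    obtain ⟨a, b, v1, v2, hab, hv1, hv2, hfa1, hfa2, hfb1, hfb2, hfc1, hfc2, hdich⟩ :=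
      collinear_exists p₁.1 p₁.2 p₂.1 p₂.2 p₃.1 p₃.2 he hcol
    have hdichP : ∀ q r : ℂ × ℂ, sqDist p₁ q = sqDist p₁ r → sqDist p₂ q = sqDist p₂ r →
        r = q ∨ r = euclApply !![a, b; b, -a] (v1, v2) q := by
      intro q r h1 h2
      simp only [sqDist] at h1 h2
      rcases hdich q.1 q.2 r.1 r.2 h1 h2 with ⟨x1, x2⟩ | ⟨x1, x2⟩
      · exact Or.inl (Prod.ext x1 x2)
      · right
        rw [euclApply_refl]
        exact Prod.ext x1 x2
    have hkey : ∀ q ∈ C₀, MvPolynomial.eval ![q.1, q.2] (g * subMap a b v1 v2 g) = 0 := by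
      intro q hq
      have hm : (sqDist p₁ q, sqDist p₂ q, sqDist p₃ q) ∈
          {x : ℂ × ℂ × ℂ | ∃ q' ∈ C₁, x = (sqDist p₁ q', sqDist p₂ q', sqDist p₃ q')} := by
        rw [← hslice]; exact ⟨q, hq, rfl⟩
      obtain ⟨r, hr, heq⟩ := hm
      simp only [Prod.mk.injEq] at heq
      rcases hdichP q r heq.1 heq.2.1 with hqr | hrq
      · rw [map_mul]
        have hz : MvPolynomial.eval ![q.1, q.2] g = 0 := by
          rw [hCg] at hr; rw [hqr] at hr; exact hr
        rw [hz, zero_mul]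
      · rw [map_mul]
        have hrg : MvPolynomial.eval ![r.1, r.2] g = 0 := by rw [hCg] at hr; exact hr
        have hz : MvPolynomial.eval ![q.1, q.2] (subMap a b v1 v2 g) = 0 := by
          rw [eval_subMap_point, ← hrq]
          exact hrg
        rw [hz, mul_zero]
    have hdvd : f ∣ g * subMap a b v1 v2 g := by
      apply dvd_of_vanish hf
      intro x hx
      have hq : ((x 0, x 1) : ℂ × ℂ) ∈ C₀ := by
        rw [hCf]
        show MvPolynomial.eval ![x 0, x 1] f = 0
        rwa [vec_two]
      have h := hkey (x 0, x 1) hq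
      show MvPolynomial.eval x (g * subMap a b v1 v2 g) = 0
      rw [← vec_two x]
      exact h
    rcases hf.prime.2.2 g (subMap a b v1 v2 g) hdvd with hfd | hfd
    · refine exists_of_eq C₀ C₁ p₁ p₂ p₃ ?_
      rw [hCf, hCg]
      ext p
      simp only [Set.mem_setOf_eq]
      exact eval_zero_iff_of_dvd hf hg hfd ![p.1, p.2]
    · have hgi : Irreducible (subMap a b v1 v2 g) :=
        irreducible_subMap a b v1 v2 hab hv1 hv2 hg
      refine ⟨!![a, b; b, -a], (v1, v2), isOrtho_refl a b hab, ?_, ?_, ?_, ?_⟩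
      · rw [euclApply_refl]; exact Prod.ext hfa1 hfa2
      · rw [euclApply_refl]; exact Prod.ext hfb1 hfb2
      · rw [euclApply_refl]; exact Prod.ext hfc1 hfc2
      · have hC0 : C₀ = {p : ℂ × ℂ | MvPolynomial.eval ![p.1, p.2] (subMap a b v1 v2 g) = 0} := by
          rw [hCf]
          ext p
          simp only [Set.mem_setOf_eq]
          exact eval_zero_iff_of_dvd hf hgi hfd ![p.1, p.2]
        rw [hC0, hCg]
        exact image_eq a b v1 v2 hab hv1 hv2 g
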